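/- Let k be a perfect field of characteristic p > 0 and M a k-vector space, with Z/pZ acting on M^{⊗p} by cyclic permutation with generator σ. Then the map ψ : M → (M^{⊗p})_σ, m ↦ [m^{⊗p}], is injective and its image equals the kernel of the trace map tr = 1 + σ + ⋯ + σ^{p-1} : (M^{⊗p})_σ → (M^{⊗p})^σ. -/

import Mathlib

open scoped TensorProduct

/-- The cyclic permutation `σ` of the `p`-th tensor power `M^{⊗p}`, as a `k`-linear map. -/
noncomputable def cyclicPerm (k M : Type*) [CommRing k] [AddCommGroup M] [Module k M]
    (p : ℕ) :
    PiTensorProduct k (fun _ : Fin p => M) →ₗ[k] PiTensorProduct k (fun _ : Fin p => M) :=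
  (PiTensorProduct.reindex k (fun _ : Fin p => M) (finRotate p)).toLinearMap

/-- The map `ψ : M → (M^{⊗p})_σ` sending `m` to the class of `m ⊗ m ⊗ ⋯ ⊗ m` in the
coinvariants `(M^{⊗p})_σ = M^{⊗p} ⧸ range (1 - σ)`. -/
noncomputable def psiPow (k M : Type*) [CommRing k] [AddCommGroup M] [Module k M]
    (p : ℕ) (m : M) :
    PiTensorProduct k (fun _ : Fin p => M) ⧸
      LinearMap.range (LinearMap.id - cyclicPerm k M p) :=
  Submodule.Quotient.mk (PiTensorProduct.tprod k (fun _ : Fin p => m))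


set_option linter.unusedSectionVars false

namespace CycAux

variable {ι : Type*} {p : ℕ}

/-- The permutation of `Fin p → ι` induced by `finRotate p`. -/
def G (ι : Type*) (p : ℕ) : Equiv.Perm (Fin p → ι) :=
  (finRotate p).arrowCongr (Equiv.refl ι)

lemma G_apply (f : Fin p → ι) : G ι p f = f ∘ (finRotate p).symm := rfl

lemma Gsymm_apply (f : Fin p → ι) : (G ι p).symm f = f ∘ (finRotate p) := rfl

open Fin.NatCast Fin.CommRing in
lemma finRotate_pow_apply (n : ℕ) (i : Fin p) [NeZero p] :
    ((finRotate p) ^ n) i = i + (n : Fin p) := by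
  induction n with
  | zero => simp
  | succ n ih =>
    rw [pow_succ', Equiv.Perm.mul_apply, ih]
    obtain ⟨m, rfl⟩ : ∃ m, p = m + 1 := ⟨p - 1, (Nat.succ_pred_eq_of_pos (NeZero.pos p)).symm⟩
    rw [finRotate_succ_apply]
    push_cast
    ring

open Fin.NatCast in
lemma finRotate_pow_self [NeZero p] : (finRotate p) ^ p = 1 := by
  ext i
  simp [finRotate_pow_apply]

lemma G_pow_apply (n : ℕ) (f : Fin p → ι) :
    (G ι p ^ n) f = f ∘ ⇑(((finRotate p).symm) ^ n) := by
  induction n with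
  | zero => rfl
  | succ n ih =>
    rw [pow_succ', Equiv.Perm.mul_apply, ih, G_apply, pow_succ]
    rfl

lemma G_pow_self [NeZero p] : (G ι p) ^ p = 1 := by
  have h1 : (finRotate p)⁻¹ ^ p = 1 := by
    rw [inv_pow, finRotate_pow_self, inv_one]
  ext f
  rw [G_pow_apply, ← Equiv.Perm.inv_def, h1]
  rfl

lemma G_pow_mod [NeZero p] (n : ℕ) : (G ι p) ^ n = (G ι p) ^ (n % p) := by
  conv_lhs => rw [← Nat.div_add_mod n p]
  rw [pow_add, pow_mul, G_pow_self, one_pow, one_mul]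

lemma G_const (i : ι) : G ι p (Function.const _ i) = Function.const _ i := rfl

lemma G_pow_const (n : ℕ) (i : ι) :
    (G ι p ^ n) (Function.const _ i) = Function.const _ i := by
  rw [G_pow_apply]; rfl

open Fin.NatCast in
lemma eq_const_of_G_fix [NeZero p] {f : Fin p → ι} (h : G ι p f = f) :
    f = Function.const _ (f 0) := by
  obtain ⟨m, hm⟩ : ∃ m, p = m + 1 := ⟨p - 1, (Nat.succ_pred_eq_of_pos (NeZero.pos p)).symm⟩
  subst hm
  have h1 : ∀ i, f (i + 1) = f i := by
    intro i
    have h2 := congrFun h (finRotate (m + 1) i)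
    rw [G_apply] at h2
    simp only [Function.comp_apply, Equiv.symm_apply_apply] at h2
    rw [finRotate_succ_apply] at h2
    exact h2.symm
  have h2 : ∀ n : ℕ, f (n : Fin (m + 1)) = f 0 := by
    intro n
    induction n with
    | zero => simp
    | succ n ih => rw [Nat.cast_succ, h1, ih]
  funext i
  rw [← Fin.cast_val_eq_self i, h2]
  rfl

lemma nonconst_of_G_pow {f : Fin p → ι} (n : ℕ)
    (hf : ¬∃ i, f = Function.const _ i) : ¬∃ i, (G ι p ^ n) f = Function.const _ i := by
  rintro ⟨i, hi⟩
  refine hf ⟨i, ?_⟩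
  have := congrArg (G ι p ^ n).symm hi
  rw [Equiv.symm_apply_apply] at this
  rw [this]
  have : (G ι p ^ n) (Function.const _ i) = Function.const _ i := G_pow_const n i
  conv_lhs => rw [← this, Equiv.symm_apply_apply]

lemma G_free (hp : p.Prime) {f : Fin p → ι} (hf : ¬∃ i, f = Function.const _ i)
    {n : ℕ} (hn0 : 0 < n) (hnp : n < p) (h : (G ι p ^ n) f = f) : False := by
  haveI : NeZero p := ⟨hp.ne_zero⟩
  have hcop : Nat.Coprime n p :=
    Nat.Coprime.symm (hp.coprime_iff_not_dvd.mpr (Nat.not_dvd_of_pos_of_lt hn0 hnp))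
  obtain ⟨a, -, ha⟩ := Nat.exists_mul_mod_eq_one_of_coprime hcop hp.one_lt
  have hfix : ∀ a : ℕ, ((G ι p ^ n) ^ a) f = f := by
    intro a
    induction a with
    | zero => rfl
    | succ a ih => rw [pow_succ, Equiv.Perm.mul_apply, h, ih]
  have h1 : G ι p f = f := by
    have h2 := hfix a
    rw [← pow_mul, G_pow_mod, ha, pow_one] at h2
    exact h2
  exact hf ⟨f 0, eq_const_of_G_fix h1⟩

end CycAux

namespace CycAux

variable {ι : Type*} {p : ℕ}

/-- The setoid whose classes are the orbits of `G`. -/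
def orbitSetoid (ι : Type*) (p : ℕ) [NeZero p] : Setoid (Fin p → ι) where
  r f g := ∃ n : ℕ, (G ι p ^ n) f = g
  iseqv := by
    constructor
    · intro f; exact ⟨0, rfl⟩
    · rintro f g ⟨n, rfl⟩
      refine ⟨n * p - n, ?_⟩
      have hle : n ≤ n * p := Nat.le_mul_of_pos_right n (NeZero.pos p)
      rw [← Equiv.Perm.mul_apply, ← pow_add, Nat.sub_add_cancel hle, G_pow_mod,
        Nat.mul_mod_left, pow_zero, Equiv.Perm.one_apply]
    · rintro f g h ⟨n, rfl⟩ ⟨m, rfl⟩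
      exact ⟨n + m, by rw [add_comm, pow_add, Equiv.Perm.mul_apply]⟩

variable [NeZero p]

/-- A choice of representative for each orbit of `G`. -/
noncomputable def rep (f : Fin p → ι) : Fin p → ι :=
  (Quotient.mk (orbitSetoid ι p) f).out

lemma rep_rel (f : Fin p → ι) : ∃ n, (G ι p ^ n) (rep f) = f :=
  @Quotient.exact _ (orbitSetoid ι p) _ _ (Quotient.out_eq _)

lemma rep_G_pow (n : ℕ) (f : Fin p → ι) : rep ((G ι p ^ n) f) = rep f :=
  congrArg Quotient.out (@Quotient.sound _ (orbitSetoid ι p) _ _ ⟨n, rfl⟩).symm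

lemma rep_idem (f : Fin p → ι) : rep (rep f) = rep f :=
  congrArg Quotient.out (Quotient.out_eq _)

/-- The index of `f` in its orbit relative to the chosen representative. -/
noncomputable def idx (f : Fin p → ι) : ℕ :=
  (Classical.choose (rep_rel f)) % p

lemma idx_spec (f : Fin p → ι) : (G ι p ^ idx f) (rep f) = f := by
  have h := Classical.choose_spec (rep_rel f)
  rw [idx, ← G_pow_mod]
  exact h

lemma idx_lt (f : Fin p → ι) : idx f < p := Nat.mod_lt _ (NeZero.pos p)

lemma rep_nonconst {f : Fin p → ι} (hf : ¬∃ i, f = Function.const _ i) :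
    ¬∃ i, rep f = Function.const _ i := by
  rintro ⟨i, hi⟩
  obtain ⟨n, hn⟩ := rep_rel f
  exact hf ⟨i, by rw [← hn, hi, G_pow_const]⟩

lemma G_pow_inj (hp : p.Prime) {f : Fin p → ι} (hf : ¬∃ i, f = Function.const _ i)
    {n₁ n₂ : ℕ} (h1 : n₁ < p) (h2 : n₂ < p) (h : (G ι p ^ n₁) f = (G ι p ^ n₂) f) :
    n₁ = n₂ := by
  wlog hle : n₁ ≤ n₂ generalizing n₁ n₂
  · exact (this h2 h1 h.symm (le_of_not_ge hle)).symm
  rcases Nat.eq_or_lt_of_le hle with heq | hlt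
  · exact heq
  · exfalso
    have key : (G ι p ^ (n₂ - n₁)) ((G ι p ^ n₁) f) = (G ι p ^ n₁) f := by
      rw [← Equiv.Perm.mul_apply, ← pow_add, Nat.sub_add_cancel hle, ← h]
    exact G_free hp (nonconst_of_G_pow n₁ hf) (Nat.sub_pos_of_lt hlt)
      (lt_of_le_of_lt (Nat.sub_le _ _) h2) key

lemma eq_of_rel_const {f : Fin p → ι} {i : ι} (n : ℕ)
    (h : (G ι p ^ n) (Function.const _ i) = f) : f = Function.const _ i := by
  rw [← h, G_pow_const]

end CycAux

namespace CycAux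

open PiTensorProduct

variable {k M : Type*} [Field k] [AddCommGroup M] [Module k M]
variable {ι : Type*} {p : ℕ}

/-- Basis-like family of the tensor power. -/
noncomputable def Bf (b : Module.Basis ι k M) (f : Fin p → ι) :
    PiTensorProduct k (fun _ : Fin p => M) :=
  tprod k (fun j => b (f j))

/-- Dual functionals. -/
noncomputable def phi (b : Module.Basis ι k M) (f : Fin p → ι) :
    PiTensorProduct k (fun _ : Fin p => M) →ₗ[k] k :=
  PiTensorProduct.lift
    ((MultilinearMap.mkPiAlgebra k (Fin p) k).compLinearMap (fun j => b.coord (f j)))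

variable (b : Module.Basis ι k M)

lemma phi_tprod (f : Fin p → ι) (v : Fin p → M) :
    phi b f (tprod k v) = ∏ j, b.repr (v j) (f j) := by
  simp [phi, Module.Basis.coord_apply]

open Classical in
lemma phi_Bf (f g : Fin p → ι) : phi b f (Bf b g) = if g = f then 1 else 0 := by
  classical
  rw [Bf, phi_tprod]
  by_cases h : g = f
  · subst h
    simp
  · rw [if_neg h]
    obtain ⟨j, hj⟩ : ∃ j, g j ≠ f j := by
      by_contra hc
      push_neg at hc
      exact h (funext hc)
    refine Finset.prod_eq_zero (Finset.mem_univ j) ?_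
    rw [Module.Basis.repr_self, Finsupp.single_apply, if_neg hj]

lemma sigma_tprod (v : Fin p → M) :
    cyclicPerm k M p (tprod k v) = tprod k (fun i => v ((finRotate p).symm i)) := by
  exact PiTensorProduct.reindex_tprod _ _

lemma sigma_Bf (f : Fin p → ι) :
    cyclicPerm k M p (Bf b f) = Bf b (G ι p f) := by
  rw [Bf, sigma_tprod]
  rfl

lemma sigma_pow_Bf (n : ℕ) (f : Fin p → ι) :
    (cyclicPerm k M p ^ n) (Bf b f) = Bf b ((G ι p ^ n) f) := by
  induction n with
  | zero => rfl
  | succ n ih =>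
    rw [pow_succ', Module.End.mul_apply, ih, sigma_Bf, pow_succ', Equiv.Perm.mul_apply]

lemma phi_sigma (f : Fin p → ι) (y : PiTensorProduct k (fun _ : Fin p => M)) :
    phi b f (cyclicPerm k M p y) = phi b ((G ι p).symm f) y := by
  have h : (phi b f) ∘ₗ (cyclicPerm k M p) = phi b ((G ι p).symm f) := by
    apply PiTensorProduct.ext
    apply MultilinearMap.ext
    intro v
    simp only [LinearMap.compMultilinearMap_apply, LinearMap.comp_apply]
    rw [sigma_tprod, phi_tprod, phi_tprod]
    rw [← Equiv.prod_comp (finRotate p)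
      (fun j => b.repr (v ((finRotate p).symm j)) (f j))]
    refine Finset.prod_congr rfl fun j _ => ?_
    rw [Equiv.symm_apply_apply]
    rfl
  exact congrFun (congrArg (fun (L : _ →ₗ[k] k) => ⇑L) h) y

lemma phi_sigma_pow (n : ℕ) (f : Fin p → ι) (y : PiTensorProduct k (fun _ : Fin p => M)) :
    phi b f ((cyclicPerm k M p ^ n) y) = phi b (((G ι p).symm ^ n) f) y := by
  induction n generalizing y with
  | zero => rfl
  | succ n ih =>
    rw [pow_succ, Module.End.mul_apply, ih (cyclicPerm k M p y), phi_sigma,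
      pow_succ', Equiv.Perm.mul_apply]

lemma span_Bf_eq_top :
    Submodule.span k (Set.range (Bf b (p := p))) = ⊤ := by
  rw [eq_top_iff, ← PiTensorProduct.span_tprod_eq_top, Submodule.span_le]
  rintro x ⟨v, rfl⟩
  have hv : (fun j => ∑ i ∈ (b.repr (v j)).support, (b.repr (v j)) i • b i) = v := by
    funext j
    conv_rhs => rw [← b.linearCombination_repr (v j)]
    rw [Finsupp.linearCombination_apply, Finsupp.sum]
  have expand := MultilinearMap.map_sum_finset (tprod k (s := fun _ : Fin p => M))
    (fun j i => (b.repr (v j)) i • b i) (fun j => (b.repr (v j)).support)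
  rw [show (fun j => ∑ i ∈ (fun j => (b.repr (v j)).support) j, (b.repr (v j)) i • b i) = v
    from hv] at expand
  rw [expand]
  refine Submodule.sum_mem _ fun F _ => ?_
  rw [MultilinearMap.map_smul_univ]
  exact Submodule.smul_mem _ _ (Submodule.subset_span ⟨F, rfl⟩)

lemma exists_coeffs (x : PiTensorProduct k (fun _ : Fin p => M)) :
    ∃ c : (Fin p → ι) →₀ k, (c.sum fun f a => a • Bf b f) = x := by
  have hx : x ∈ Submodule.span k (Set.range (Bf b (p := p))) := by
    rw [span_Bf_eq_top]; trivial
  exact Finsupp.mem_span_range_iff_exists_finsupp.mp hx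

lemma coeffs_eq {c : (Fin p → ι) →₀ k} {x : PiTensorProduct k (fun _ : Fin p => M)}
    (hc : (c.sum fun f a => a • Bf b f) = x) (f : Fin p → ι) :
    c f = phi b f x := by
  classical
  rw [← hc, map_finsuppSum]
  simp_rw [map_smul, phi_Bf, smul_eq_mul, mul_ite, mul_one, mul_zero]
  rw [Finsupp.sum, Finset.sum_ite_eq' c.support f (fun g => c g)]
  by_cases h : f ∈ c.support
  · rw [if_pos h]
  · rw [if_neg h]
    exact Finsupp.notMem_support_iff.mp h

end CycAux

namespace CycAux

variable {k M : Type*} [Field k] [AddCommGroup M] [Module k M]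
variable {ι : Type*} {p : ℕ} (b : Module.Basis ι k M)

lemma core (hp : p.Prime) (x : PiTensorProduct k (fun _ : Fin p => M))
    (hconst : ∀ i : ι, phi b (Function.const (Fin p) i) x = 0)
    (hN : (∑ n ∈ Finset.range p, cyclicPerm k M p ^ n) x = 0) :
    ∃ y, y - cyclicPerm k M p y = x := by
  haveI : NeZero p := ⟨hp.ne_zero⟩
  classical
  obtain ⟨c, hc⟩ := exists_coeffs b x
  set wv : (Fin p → ι) → PiTensorProduct k (fun _ : Fin p => M) :=
    fun f => ∑ n ∈ Finset.Ico (idx f) p, Bf b ((G ι p ^ n) (rep f)) with hwv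
  have step1 : ∀ f, wv f - cyclicPerm k M p (wv f) = Bf b f - Bf b (rep f) := by
    intro f
    rw [hwv]
    simp only [map_sum, sigma_Bf]
    have hstep : ∀ n, G ι p ((G ι p ^ n) (rep f)) = (G ι p ^ (n + 1)) (rep f) := fun n => by
      rw [pow_succ', Equiv.Perm.mul_apply]
    simp_rw [hstep]
    rw [← Finset.sum_sub_distrib]
    have htel : ∑ n ∈ Finset.Ico (idx f) p,
        (Bf b ((G ι p ^ n) (rep f)) - Bf b ((G ι p ^ (n + 1)) (rep f)))
        = Bf b ((G ι p ^ idx f) (rep f)) - Bf b ((G ι p ^ p) (rep f)) := by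
      rw [Finset.sum_Ico_eq_sub _ (le_of_lt (idx_lt f)), Finset.sum_range_sub'
        (fun n => Bf b ((G ι p ^ n) (rep f))), Finset.sum_range_sub'
        (fun n => Bf b ((G ι p ^ n) (rep f)))]
      abel
    rw [htel, idx_spec, G_pow_self, Equiv.Perm.one_apply]
  -- the candidate antiderivative
  refine ⟨c.sum fun f a => a • wv f, ?_⟩
  have hσy : cyclicPerm k M p (c.sum fun f a => a • wv f)
      = c.sum fun f a => a • cyclicPerm k M p (wv f) := by
    rw [map_finsuppSum]
    exact Finsupp.sum_congr fun f _ => by rw [map_smul]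
  rw [hσy, ← Finsupp.sum_sub]
  have hsplit : (c.sum fun f a => a • wv f - a • cyclicPerm k M p (wv f))
      = (c.sum fun f a => a • Bf b f) - (c.sum fun f a => a • Bf b (rep f)) := by
    rw [← Finsupp.sum_sub]
    exact Finsupp.sum_congr fun f _ => by rw [← smul_sub, step1, smul_sub]
  rw [hsplit, hc]
  -- it remains to prove that the "z" term vanishes
  have claim : ∀ f₀ : Fin p → ι,
      (∑ f ∈ c.support.filter fun f => rep f = f₀, c f) = 0 := by
    intro f₀
    by_cases hconst0 : ∃ i, f₀ = Function.const (Fin p) i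
    · obtain ⟨i, rfl⟩ := hconst0
      refine Finset.sum_eq_zero fun f hf => ?_
      rw [Finset.mem_filter] at hf
      obtain ⟨n, hn⟩ := rep_rel f
      rw [hf.2] at hn
      have hfc : f = Function.const (Fin p) i := eq_of_rel_const n hn
      rw [hfc, coeffs_eq b hc]
      exact hconst i
    by_cases hrep0 : rep f₀ = f₀
    · -- main case : free orbit
      have hsub : (∑ f ∈ c.support.filter fun f => rep f = f₀, c f)
          = ∑ f ∈ (Finset.range p).image fun n => (G ι p ^ n) f₀, c f := by
        refine Finset.sum_subset ?_ ?_
        · intro f hf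
          rw [Finset.mem_filter] at hf
          refine Finset.mem_image.mpr ⟨idx f, Finset.mem_range.mpr (idx_lt f), ?_⟩
          rw [← hf.2]
          exact idx_spec f
        · intro f hf hnf
          obtain ⟨n, _, rfl⟩ := Finset.mem_image.mp hf
          by_contra hne
          refine hnf (Finset.mem_filter.mpr ⟨Finsupp.mem_support_iff.mpr hne, ?_⟩)
          rw [rep_G_pow, hrep0]
      rw [hsub, Finset.sum_image (fun n₁ h₁ n₂ h₂ h =>
        G_pow_inj hp (fun hcc => hconst0 hcc) (Finset.mem_range.mp h₁)
          (Finset.mem_range.mp h₂) h)]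
      -- now use `hN`
      have hphiN : ∑ n ∈ Finset.range p, phi b (((G ι p).symm ^ n) f₀) x = 0 := by
        have h0 : phi b f₀ ((∑ n ∈ Finset.range p, cyclicPerm k M p ^ n) x) = 0 := by
          rw [hN, map_zero]
        rw [LinearMap.sum_apply, map_sum] at h0
        simp_rw [phi_sigma_pow] at h0
        exact h0
      have hre : ∀ n ∈ Finset.range p, (G ι p ^ n) f₀ = ((G ι p).symm ^ ((p - n) % p)) f₀ := by
        intro n hn
        rw [Finset.mem_range] at hn
        have hsp : ((G ι p).symm ^ ((p - n) % p)) = (G ι p ^ ((p - n) % p))⁻¹ := by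
          rw [← inv_pow]; rfl
        apply (G ι p ^ ((p - n) % p)).injective
        rw [hsp, Equiv.Perm.inv_def, Equiv.apply_symm_apply, ← Equiv.Perm.mul_apply, ← pow_add, G_pow_mod]
        have hmod : ((p - n) % p + n) % p = 0 := by
          rw [Nat.mod_add_mod, Nat.sub_add_cancel (le_of_lt hn), Nat.mod_self]
        rw [hmod, pow_zero, Equiv.Perm.one_apply]
      calc ∑ n ∈ Finset.range p, c ((G ι p ^ n) f₀)
          = ∑ n ∈ Finset.range p, phi b (((G ι p).symm ^ n) f₀) x := by
            refine Finset.sum_nbij' (fun n => (p - n) % p) (fun n => (p - n) % p)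
              ?_ ?_ ?_ ?_ ?_
            · intro a ha
              exact Finset.mem_range.mpr (Nat.mod_lt _ (NeZero.pos p))
            · intro a ha
              exact Finset.mem_range.mpr (Nat.mod_lt _ (NeZero.pos p))
            · intro a ha
              rw [Finset.mem_range] at ha
              show (p - (p - a) % p) % p = a
              rcases Nat.eq_zero_or_pos a with rfl | hpos
              · rw [Nat.sub_zero, Nat.mod_self, Nat.sub_zero, Nat.mod_self]
              · rw [Nat.mod_eq_of_lt (show p - a < p by omega),
                  Nat.mod_eq_of_lt (show p - (p - a) < p by omega)]
                omega
            · intro a ha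
              rw [Finset.mem_range] at ha
              show (p - (p - a) % p) % p = a
              rcases Nat.eq_zero_or_pos a with rfl | hpos
              · rw [Nat.sub_zero, Nat.mod_self, Nat.sub_zero, Nat.mod_self]
              · rw [Nat.mod_eq_of_lt (show p - a < p by omega),
                  Nat.mod_eq_of_lt (show p - (p - a) < p by omega)]
                omega
            · intro n hn
              rw [coeffs_eq b hc, hre n hn]
        _ = 0 := hphiN
    · refine Finset.sum_eq_zero fun f hf => ?_
      rw [Finset.mem_filter] at hf
      exfalso
      refine hrep0 ?_
      rw [← hf.2, rep_idem]
  have hz : (c.sum fun f a => a • Bf b (rep f)) = 0 := by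
    rw [Finsupp.sum]
    rw [← Finset.sum_fiberwise_of_maps_to (g := rep)
      (fun f hf => Finset.mem_image_of_mem rep hf) (fun f => c f • Bf b (rep f))]
    refine Finset.sum_eq_zero fun f₀ _ => ?_
    have : ∀ f ∈ c.support.filter fun f => rep f = f₀, c f • Bf b (rep f) = c f • Bf b f₀ := by
      intro f hf
      rw [(Finset.mem_filter.mp hf).2]
    rw [Finset.sum_congr rfl this, ← Finset.sum_smul, claim f₀, zero_smul]
  rw [hz, sub_zero]

end CycAux

namespace CycAux

open PiTensorProduct

variable {k M : Type*} [Field k] [AddCommGroup M] [Module k M]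
variable {ι : Type*} {p : ℕ} (b : Module.Basis ι k M)

lemma sigma_pow_diag (n : ℕ) (m : M) :
    (cyclicPerm k M p ^ n) (tprod k fun _ : Fin p => m) = tprod k fun _ : Fin p => m := by
  induction n with
  | zero => rfl
  | succ n ih =>
    rw [pow_succ', Module.End.mul_apply, ih, sigma_tprod]

lemma N_diag [CharP k p] (m : M) :
    (∑ n ∈ Finset.range p, cyclicPerm k M p ^ n) (tprod k fun _ : Fin p => m) = 0 := by
  rw [LinearMap.sum_apply]
  simp_rw [sigma_pow_diag]
  rw [Finset.sum_const, Finset.card_range, ← Nat.cast_smul_eq_nsmul k,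
    CharP.cast_eq_zero, zero_smul]

lemma N_Bf_const [CharP k p] (i : ι) :
    (∑ n ∈ Finset.range p, cyclicPerm k M p ^ n) (Bf b (Function.const (Fin p) i)) = 0 := by
  rw [LinearMap.sum_apply]
  have h : ∀ n : ℕ, (cyclicPerm k M p ^ n) (Bf b (Function.const (Fin p) i))
      = Bf b (Function.const (Fin p) i) := fun n => by rw [sigma_pow_Bf, G_pow_const]
  simp_rw [h]
  rw [Finset.sum_const, Finset.card_range, ← Nat.cast_smul_eq_nsmul k,
    CharP.cast_eq_zero, zero_smul]

lemma phi_diag_const (i : ι) (m : M) :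
    phi b (Function.const (Fin p) i) (tprod k fun _ : Fin p => m) = (b.repr m i) ^ p := by
  rw [phi_tprod]
  simp [Finset.prod_const]

end CycAux


open CycAux PiTensorProduct in
/-- Over a perfect field `k` of characteristic `p`, the map
`ψ : M → (M^{⊗p})_σ`, `m ↦ [m^{⊗p}]`, is injective, and its image is exactly the kernel of
the trace map `tr = 1 + σ + ⋯ + σ^{p-1} : (M^{⊗p})_σ → (M^{⊗p})^σ`, i.e. the image under
the quotient projection of the kernel of `N = 1 + σ + ⋯ + σ^{p-1}` on `M^{⊗p}`. -/
theorem psiPow_injective_range_eq_ker_trace {k M : Type*} [Field k] [PerfectField k]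
    (p : ℕ) [Fact p.Prime] [CharP k p] [AddCommGroup M] [Module k M] :
    Function.Injective (psiPow k M p) ∧
      Set.range (psiPow k M p) =
        (Submodule.Quotient.mk
            (p := LinearMap.range (LinearMap.id - cyclicPerm k M p))) ''
          (LinearMap.ker (∑ i ∈ Finset.range p, (cyclicPerm k M p) ^ i) : Set _) := by
  classical
  have hp : p.Prime := Fact.out
  haveI : NeZero p := ⟨hp.ne_zero⟩
  set b := Module.Basis.ofVectorSpace k M with hb
  have hconstinj : Function.Injective
      (fun i : Module.Basis.ofVectorSpaceIndex k M => Function.const (Fin p) i) := by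
    intro i i' h
    exact congrFun h ⟨0, NeZero.pos p⟩
  have hGc : ∀ i : Module.Basis.ofVectorSpaceIndex k M,
      (G (Module.Basis.ofVectorSpaceIndex k M) p).symm (Function.const (Fin p) i)
        = Function.const (Fin p) i := by
    intro i
    apply (G _ p).injective
    rw [Equiv.apply_symm_apply, G_const]
  constructor
  · intro m m' h
    obtain ⟨y, hy⟩ := LinearMap.mem_range.mp ((Submodule.Quotient.eq _).mp h)
    have key : ∀ i, b.repr m i ^ p = b.repr m' i ^ p := by
      intro i
      have h1 := congrArg (phi b (Function.const (Fin p) i)) hy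
      rw [LinearMap.sub_apply, LinearMap.id_apply, map_sub, map_sub, phi_sigma,
        hGc, sub_self, phi_diag_const, phi_diag_const] at h1
      exact (sub_eq_zero.mp h1.symm)
    have hrepr : b.repr m = b.repr m' := by
      ext i
      exact (frobeniusEquiv k p).injective (key i)
    exact b.repr.injective hrepr
  · apply Set.Subset.antisymm
    · rintro q ⟨m, rfl⟩
      set z : PiTensorProduct k (fun _ : Fin p => M) :=
        ∑ i ∈ (b.repr m).support, ((b.repr m) i ^ p) • Bf b (Function.const (Fin p) i)
        with hz
      have hNz : (∑ n ∈ Finset.range p, cyclicPerm k M p ^ n) z = 0 := by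
        rw [hz, map_sum]
        refine Finset.sum_eq_zero fun i _ => ?_
        rw [map_smul, N_Bf_const, smul_zero]
      refine ⟨z, ?_, ?_⟩
      · rw [SetLike.mem_coe, LinearMap.mem_ker]
        exact hNz
      · rw [psiPow, Submodule.Quotient.eq]
        have hcon : ∀ i, phi b (Function.const (Fin p) i)
            (z - tprod k fun _ : Fin p => m) = 0 := by
          intro i
          rw [map_sub, hz, map_sum]
          simp_rw [map_smul, phi_Bf]
          rw [phi_diag_const]
          rw [Finset.sum_eq_single i
              (fun i' _ hii => by
                rw [if_neg (fun hcc => hii (hconstinj hcc)), smul_zero])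
              (fun hmem => by
                rw [Finsupp.notMem_support_iff.mp hmem, zero_pow hp.ne_zero, zero_smul]),
            if_pos rfl, smul_eq_mul, mul_one, sub_self]
        have hNzz : (∑ n ∈ Finset.range p, cyclicPerm k M p ^ n)
            (z - tprod k fun _ : Fin p => m) = 0 := by
          rw [map_sub, hNz, N_diag, sub_zero]
        obtain ⟨y, hy⟩ := core b hp _ hcon hNzz
        exact ⟨y, by rw [LinearMap.sub_apply, LinearMap.id_apply]; exact hy⟩
    · rintro q ⟨x, hx, rfl⟩
      rw [SetLike.mem_coe, LinearMap.mem_ker] at hx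
      obtain ⟨c, hc⟩ := exists_coeffs b x
      set d : Module.Basis.ofVectorSpaceIndex k M →₀ k :=
        Finsupp.comapDomain (fun i => Function.const (Fin p) i) c hconstinj.injOn with hd
      set m : M := b.repr.symm
        (Finsupp.mapRange (fun a => (frobeniusEquiv k p).symm a) (map_zero _) d) with hm
      have hreprm : b.repr m
          = Finsupp.mapRange (fun a => (frobeniusEquiv k p).symm a) (map_zero _) d := by
        rw [hm, LinearEquiv.apply_symm_apply]
      refine ⟨m, ?_⟩
      rw [psiPow, Submodule.Quotient.eq]
      have hcon : ∀ i, phi b (Function.const (Fin p) i)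
          ((tprod k fun _ : Fin p => m) - x) = 0 := by
        intro i
        rw [map_sub, phi_diag_const, hreprm, Finsupp.mapRange_apply]
        have hfr : ((frobeniusEquiv k p).symm (d i)) ^ p = d i := by
          have h2 := frobenius_apply_frobeniusEquiv_symm k p (d i)
          rwa [frobenius_def] at h2
        rw [hfr, hd, Finsupp.comapDomain_apply, ← coeffs_eq b hc, sub_self]
      have hNzz : (∑ n ∈ Finset.range p, cyclicPerm k M p ^ n)
          ((tprod k fun _ : Fin p => m) - x) = 0 := by
        rw [map_sub, hx, N_diag, sub_zero]
      obtain ⟨y, hy⟩ := core b hp _ hcon hNzz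
      exact ⟨y, by rw [LinearMap.sub_apply, LinearMap.id_apply]; exact hy⟩
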